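/- The tridiagonal (ρ+1)×(ρ+1) matrix L with entries L_{i,i-1} = iγ, L_{i,i} = k - iγ - (ρ-i)β, and L_{i,i+1} = (ρ-i)β (for 0 ≤ i ≤ ρ), where k, γ, β, ρ are positive integers, has eigenvalues exactly {k - i(γ+β) : 0 ≤ i ≤ ρ}; in particular its eigenvalues are in arithmetic progression with common difference γ+β. -/

import Mathlib

open SimpleGraph

/-- The Hamming graph on `Fin n → Q`: words adjacent iff they differ in one coordinate. -/
def hammingGraph (n : ℕ) (Q : Type*) [DecidableEq Q] : SimpleGraph (Fin n → Q) where
  Adj x y := hammingDist x y = 1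
  symm := ⟨fun x y h => by show hammingDist y x = 1; rw [hammingDist_comm]; exact h⟩
  loopless := ⟨fun x h => by have h' : hammingDist x x = 1 := h; rw [hammingDist_self] at h'; exact absurd h'.symm one_ne_zero⟩

/-- Distance from a vertex to a code, via graph distance. -/
noncomputable def distToCode {V : Type*} (G : SimpleGraph V) (C : Set V) (x : V) : ℕ :=
  sInf {d | ∃ c ∈ C, G.dist x c = d}

/-- The `i`-th cell of the distance partition of a code. -/
noncomputable def codeCell {V : Type*} (G : SimpleGraph V) (C : Set V) (i : ℕ) : Set V :=
  {x | distToCode G C x = i}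

/-- The number of neighbors of `x` lying in `S`. -/
noncomputable def nbrCount {V : Type*} (G : SimpleGraph V) (x : V) (S : Set V) : ℕ :=
  (G.neighborSet x ∩ S).ncard

/-- Covering radius of a code. -/
noncomputable def covRad {V : Type*} (G : SimpleGraph V) (C : Set V) : ℕ :=
  sSup {d | ∃ x, distToCode G C x = d}

/-- A code is completely regular if its distance partition is equitable. -/
def IsCompRegCode {V : Type*} (G : SimpleGraph V) (C : Set V) : Prop :=
  ∀ i j : ℕ, ∀ x ∈ codeCell G C i, ∀ y ∈ codeCell G C i,
    nbrCount G x (codeCell G C j) = nbrCount G y (codeCell G C j)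

/-- Intersection numbers `γ, α, β` of a code with covering radius `ρ`. -/
def HasIntNums {V : Type*} (G : SimpleGraph V) (C : Set V) (ρ : ℕ) (γ α β : ℕ → ℕ) : Prop :=
  γ 0 = 0 ∧ β ρ = 0 ∧
  ∀ i ≤ ρ, ∀ x ∈ codeCell G C i,
    (1 ≤ i → nbrCount G x (codeCell G C (i-1)) = γ i) ∧
    nbrCount G x (codeCell G C i) = α i ∧
    (i < ρ → nbrCount G x (codeCell G C (i+1)) = β i)

/-- Equitable partition of the vertex set of a graph. -/
def IsEquitable {V : Type*} (G : SimpleGraph V) (Pa : Set (Set V)) : Prop :=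
  ∀ P ∈ Pa, ∀ P' ∈ Pa, ∀ x ∈ P, ∀ y ∈ P, nbrCount G x P' = nbrCount G y P'

/-- Quotient graph of a graph by a partition of its vertex set. -/
def quotientGraph {V : Type*} (G : SimpleGraph V) (Pa : Set (Set V)) : SimpleGraph Pa where
  Adj P P' := P ≠ P' ∧ ∃ x ∈ (P : Set V), ∃ y ∈ (P' : Set V), G.Adj x y
  symm := ⟨by
    rintro P P' ⟨hne, x, hx, y, hy, hxy⟩
    exact ⟨hne.symm, y, hy, x, hx, hxy.symm⟩⟩
  loopless := ⟨by rintro P ⟨hne, -⟩; exact hne rfl⟩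

/-- Completely regular partition with common intersection numbers. -/
def IsCompRegPartition {V : Type*} (G : SimpleGraph V) (Pa : Set (Set V))
    (ρ : ℕ) (γ α β : ℕ → ℕ) : Prop :=
  Setoid.IsPartition Pa ∧ IsEquitable G Pa ∧
    ∀ P ∈ Pa, IsCompRegCode G P ∧ covRad G P = ρ ∧ HasIntNums G P ρ γ α β

/-- Distance-regular graph of diameter `D` with intersection arrays `b`, `c`. -/
def IsDistRegular {V : Type*} (G : SimpleGraph V) (D : ℕ) (b c : ℕ → ℕ) : Prop :=
  G.Connected ∧ (∀ x y : V, G.dist x y ≤ D) ∧ (∃ x y : V, G.dist x y = D) ∧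
  ∀ i ≤ D, ∀ x y : V, G.dist x y = i →
    (1 ≤ i → nbrCount G y {z | G.dist x z = i - 1} = c i) ∧
    (i < D → nbrCount G y {z | G.dist x z = i + 1} = b i)

/-- The tridiagonal quotient matrix of a completely regular code. -/
noncomputable def quotMatrix (ρ : ℕ) (γ α β : ℕ → ℕ) : Matrix (Fin (ρ+1)) (Fin (ρ+1)) ℝ :=
  Matrix.of fun i j =>
    if (j : ℕ) + 1 = (i : ℕ) then (γ (i : ℕ) : ℝ)
    else if (i : ℕ) = (j : ℕ) then (α (i : ℕ) : ℝ)
    else if (i : ℕ) + 1 = (j : ℕ) then (β (i : ℕ) : ℝ)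
    else 0


noncomputable def cEnt (k γ β ρ : ℕ) (n m : ℕ) : ℝ :=
  (if n = m then (k:ℝ) else 0)
  + (if n ≤ m ∧ 1 ≤ n then (Nat.choose m (n-1) : ℝ) * ((γ:ℝ) * (-1)^(m-n+1) - (β:ℝ)) else 0)
  + (if n < m then (Nat.choose m n : ℝ) * (β:ℝ) * (ρ:ℝ) else 0)

lemma cEnt_eq_zero (k γ β ρ n m : ℕ) (h : m < n) : cEnt k γ β ρ n m = 0 := by
  unfold cEnt
  rw [if_neg (by omega), if_neg (by omega), if_neg (by omega)]
  ring

lemma cEnt_diag (k γ β ρ m : ℕ) : cEnt k γ β ρ m m = (k:ℝ) - (m:ℝ) * ((γ:ℝ) + (β:ℝ)) := by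
  unfold cEnt
  rcases Nat.eq_zero_or_pos m with h | h
  · subst h; norm_num
  · rw [if_pos rfl, if_pos ⟨le_refl m, h⟩, if_neg (lt_irrefl m), Nat.sub_self]
    have hch : (m.choose (m-1) : ℝ) = (m:ℝ) := by
      have h1 := Nat.choose_symm (Nat.sub_le m 1)
      rw [Nat.sub_sub_self h] at h1
      rw [← h1, Nat.choose_one_right]
    rw [hch]
    ring

lemma key_scalar (k γ β ρ m : ℕ) (hm : m ≤ ρ) (x : ℝ) :
    x * γ * (x-1)^m + ((k:ℝ) - x*γ - ((ρ:ℝ) - x)*β) * x^m + ((ρ:ℝ)-x)*β*(x+1)^m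
      = ∑ n ∈ Finset.range (ρ+1), x^n * cEnt k γ β ρ n m := by
  have hsub : Finset.range (m+1) ⊆ Finset.range (ρ+1) := Finset.range_subset_range.2 (by omega)
  rw [← Finset.sum_subset hsub (fun n _ hn => by
    have : m < n := by simpa using hn
    rw [cEnt_eq_zero _ _ _ _ _ _ this, mul_zero])]
  have hsplit : ∑ n ∈ Finset.range (m+1), x^n * cEnt k γ β ρ n m
      = (∑ n ∈ Finset.range (m+1), (if n = m then x^n * (k:ℝ) else 0))
      + (∑ n ∈ Finset.range (m+1), (if 1 ≤ n then
            x^n * ((Nat.choose m (n-1) : ℝ) * ((γ:ℝ) * (-1)^(m-n+1) - (β:ℝ))) else 0))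
      + (∑ n ∈ Finset.range (m+1), (if n < m then
            x^n * ((Nat.choose m n : ℝ) * (β:ℝ) * (ρ:ℝ)) else 0)) := by
    rw [← Finset.sum_add_distrib, ← Finset.sum_add_distrib]
    refine Finset.sum_congr rfl fun n hn => ?_
    have hn' : n ≤ m := by simpa [Nat.lt_succ_iff] using hn
    unfold cEnt
    rw [mul_add, mul_add]
    congr 1
    · congr 1
      · split_ifs <;> simp
      · split_ifs with h1 h2 h2 <;> first | ring1 | (exfalso; omega)
    · split_ifs <;> simp
  rw [hsplit]
  rw [Finset.sum_ite_eq' (Finset.range (m+1)) m (fun n => x^n * (k:ℝ)),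
      if_pos (Finset.self_mem_range_succ m)]
  have h2 : (∑ n ∈ Finset.range (m+1), (if 1 ≤ n then
        x^n * ((Nat.choose m (n-1) : ℝ) * ((γ:ℝ) * (-1)^(m-n+1) - (β:ℝ))) else 0))
      = ∑ j ∈ Finset.range m,
          x^(j+1) * ((Nat.choose m j : ℝ) * ((γ:ℝ) * (-1)^(m-(j+1)+1) - (β:ℝ))) := by
    rw [Finset.sum_range_succ' (fun n => (if 1 ≤ n then
        x^n * ((Nat.choose m (n-1) : ℝ) * ((γ:ℝ) * (-1)^(m-n+1) - (β:ℝ))) else 0)) m]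
    rw [if_neg (by omega), add_zero]
    refine Finset.sum_congr rfl fun j _ => ?_
    rw [if_pos (Nat.le_add_left 1 j), Nat.add_sub_cancel]
  have h3 : (∑ n ∈ Finset.range (m+1), (if n < m then
        x^n * ((Nat.choose m n : ℝ) * (β:ℝ) * (ρ:ℝ)) else 0))
      = ∑ j ∈ Finset.range m, x^j * ((Nat.choose m j : ℝ) * (β:ℝ) * (ρ:ℝ)) := by
    rw [Finset.sum_range_succ, if_neg (lt_irrefl m), add_zero]
    exact Finset.sum_congr rfl fun j hj => if_pos (Finset.mem_range.1 hj)
  rw [h2, h3]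
  have hxm : (x - 1)^m = ∑ j ∈ Finset.range (m+1),
      x^j * (-1:ℝ)^(m-j) * (Nat.choose m j : ℝ) := by
    rw [sub_eq_add_neg, add_pow]
  have hxp : (x + 1)^m = ∑ j ∈ Finset.range (m+1), x^j * (Nat.choose m j : ℝ) := by
    rw [add_pow]
    exact Finset.sum_congr rfl fun j _ => by rw [one_pow, mul_one]
  rw [hxm, hxp, Finset.sum_range_succ, Finset.sum_range_succ]
  simp only [Nat.sub_self, pow_zero, Nat.choose_self, Nat.cast_one, mul_one, one_mul]
  have hsum : x * γ * (∑ j ∈ Finset.range m, x^j * (-1:ℝ)^(m-j) * (Nat.choose m j : ℝ))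
      + ((ρ:ℝ) - x) * β * (∑ j ∈ Finset.range m, x^j * (Nat.choose m j : ℝ))
      = (∑ j ∈ Finset.range m,
          x^(j+1) * ((Nat.choose m j : ℝ) * ((γ:ℝ) * (-1)^(m-(j+1)+1) - (β:ℝ))))
      + (∑ j ∈ Finset.range m, x^j * ((Nat.choose m j : ℝ) * (β:ℝ) * (ρ:ℝ))) := by
    rw [Finset.mul_sum, Finset.mul_sum, ← Finset.sum_add_distrib, ← Finset.sum_add_distrib]
    refine Finset.sum_congr rfl fun j hj => ?_
    have hj' : j < m := Finset.mem_range.1 hj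
    have he : m - (j+1) + 1 = m - j := by omega
    rw [he]
    ring
  linear_combination hsum

lemma sum_tridiag (ρ : ℕ) (a b c : ℝ) (g : ℕ → ℝ) (i : Fin (ρ+1))
    (ha : (i:ℕ) = 0 → a = 0) (hc : (i:ℕ) = ρ → c = 0) :
    ∑ j : Fin (ρ+1), (if (j:ℕ)+1 = (i:ℕ) then a
      else if (i:ℕ) = (j:ℕ) then b
      else if (i:ℕ)+1 = (j:ℕ) then c else 0) * g (j:ℕ)
    = a * g ((i:ℕ)-1) + b * g (i:ℕ) + c * g ((i:ℕ)+1) := by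
  rw [Fin.sum_univ_eq_sum_range (fun j => (if j+1 = (i:ℕ) then a
      else if (i:ℕ) = j then b
      else if (i:ℕ)+1 = j then c else 0) * g j) (ρ+1)]
  have hstep : ∀ j ∈ Finset.range (ρ+1),
      (if j+1 = (i:ℕ) then a else if (i:ℕ) = j then b
        else if (i:ℕ)+1 = j then c else 0) * g j
      = (if j = (i:ℕ)-1 then a * g j else 0) + (if j = (i:ℕ) then b * g j else 0)
        + (if j = (i:ℕ)+1 then c * g j else 0) := by
    intro j hj
    rcases Nat.eq_zero_or_pos (i:ℕ) with h0 | h0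
    · rw [ha h0, h0]
      split_ifs <;> first | ring1 | (exfalso; first | assumption | omega)
    · split_ifs <;> first | ring1 | (exfalso; first | assumption | omega)
  rw [Finset.sum_congr rfl hstep, Finset.sum_add_distrib, Finset.sum_add_distrib,
    Finset.sum_ite_eq' _ _ (fun j => a * g j), Finset.sum_ite_eq' _ _ (fun j => b * g j),
    Finset.sum_ite_eq' _ _ (fun j => c * g j)]
  have h1 : (i:ℕ)-1 ∈ Finset.range (ρ+1) := Finset.mem_range.2 (by omega)
  have h2 : (i:ℕ) ∈ Finset.range (ρ+1) := Finset.mem_range.2 i.isLt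
  rw [if_pos h1, if_pos h2]
  by_cases h3 : (i:ℕ) = ρ
  · rw [if_neg (by simp [h3]), hc h3]
    ring
  · rw [if_pos (Finset.mem_range.2 (by have := i.isLt; omega))]

noncomputable def cMat (k γ β ρ : ℕ) : Matrix (Fin (ρ+1)) (Fin (ρ+1)) ℝ :=
  Matrix.of fun n m => cEnt k γ β ρ (n:ℕ) (m:ℕ)

noncomputable def vA (ρ : ℕ) : Matrix (Fin (ρ+1)) (Fin (ρ+1)) ℝ :=
  Matrix.vandermonde (fun i : Fin (ρ+1) => ((i:ℕ):ℝ))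

lemma vA_det_ne_zero (ρ : ℕ) : (vA ρ).det ≠ 0 := by
  rw [vA, Matrix.det_vandermonde]
  refine Finset.prod_ne_zero_iff.2 fun i _ => Finset.prod_ne_zero_iff.2 fun j hj => ?_
  have hij : i < j := Finset.mem_Ioi.1 hj
  have : ((i:ℕ):ℝ) < ((j:ℕ):ℝ) := by exact_mod_cast (Fin.lt_iff_val_lt_val.1 hij)
  exact sub_ne_zero_of_ne (ne_of_gt this)

lemma LA_eq_AC (k γ β ρ : ℕ)
    (L : Matrix (Fin (ρ+1)) (Fin (ρ+1)) ℝ)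
    (hL : L = Matrix.of fun (i j : Fin (ρ+1)) =>
      if (j : ℕ) + 1 = (i : ℕ) then ((i : ℕ) : ℝ) * (γ : ℝ)
      else if (i : ℕ) = (j : ℕ) then
        (k : ℝ) - ((i : ℕ) : ℝ) * (γ : ℝ) - ((ρ : ℝ) - ((i : ℕ) : ℝ)) * (β : ℝ)
      else if (i : ℕ) + 1 = (j : ℕ) then ((ρ : ℝ) - ((i : ℕ) : ℝ)) * (β : ℝ)
      else 0) :
    L * vA ρ = vA ρ * cMat k γ β ρ := by
  subst hL
  ext i m
  rw [Matrix.mul_apply, Matrix.mul_apply]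
  simp only [Matrix.of_apply, vA, Matrix.vandermonde_apply, cMat]
  have ha : (i:ℕ) = 0 → ((i:ℕ):ℝ) * (γ:ℝ) = 0 := fun h => by rw [h]; simp
  have hc : (i:ℕ) = ρ → ((ρ:ℝ) - ((i:ℕ):ℝ)) * (β:ℝ) = 0 := fun h => by
    rw [h, sub_self, zero_mul]
  have hl := sum_tridiag ρ (((i:ℕ):ℝ) * (γ:ℝ))
    ((k:ℝ) - ((i:ℕ):ℝ) * (γ:ℝ) - ((ρ:ℝ) - ((i:ℕ):ℝ)) * (β:ℝ))
    (((ρ:ℝ) - ((i:ℕ):ℝ)) * (β:ℝ)) (fun t => ((t:ℕ):ℝ)^(m:ℕ)) i ha hc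
  rw [hl, Fin.sum_univ_eq_sum_range
    (fun n => ((i:ℕ):ℝ)^n * cEnt k γ β ρ n (m:ℕ)) (ρ+1),
    ← key_scalar k γ β ρ (m:ℕ) (by have := m.isLt; omega) ((i:ℕ):ℝ)]
  beta_reduce
  rcases Nat.eq_zero_or_pos (i:ℕ) with h0 | h0
  · rw [h0]
    try norm_num
  · rw [Nat.cast_sub h0, Nat.cast_one, Nat.cast_add, Nat.cast_one]

/-- the tridiagonal quotient matrix has eigenvalues `k - i(γ+β)`,
an arithmetic progression with common difference `γ+β`. -/
theorem tridiagonal_eigenvalues (k γ β ρ : ℕ)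
    (hk : 0 < k) (hγ : 0 < γ) (hβ : 0 < β) (hρ : 0 < ρ)
    (L : Matrix (Fin (ρ+1)) (Fin (ρ+1)) ℝ)
    (hL : L = Matrix.of fun (i j : Fin (ρ+1)) =>
      if (j : ℕ) + 1 = (i : ℕ) then ((i : ℕ) : ℝ) * (γ : ℝ)
      else if (i : ℕ) = (j : ℕ) then
        (k : ℝ) - ((i : ℕ) : ℝ) * (γ : ℝ) - ((ρ : ℝ) - ((i : ℕ) : ℝ)) * (β : ℝ)
      else if (i : ℕ) + 1 = (j : ℕ) then ((ρ : ℝ) - ((i : ℕ) : ℝ)) * (β : ℝ)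
      else 0) :
    spectrum ℝ L = {x : ℝ | ∃ i : Fin (ρ+1), x = (k : ℝ) - ((i : ℕ) : ℝ) * ((γ : ℝ) + (β : ℝ))} := by
  have hLA := LA_eq_AC k γ β ρ L hL
  have hdA := vA_det_ne_zero ρ
  have htri : ∀ x : ℝ,
      (algebraMap ℝ (Matrix (Fin (ρ+1)) (Fin (ρ+1)) ℝ) x - cMat k γ β ρ).BlockTriangular id := by
    intro x p q hpq
    have hqp : (q:ℕ) < (p:ℕ) := hpq
    simp only [Matrix.sub_apply, Matrix.algebraMap_matrix_apply, cMat, Matrix.of_apply]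
    rw [if_neg (fun h => by subst h; exact lt_irrefl _ hqp),
      cEnt_eq_zero _ _ _ _ _ _ hqp, sub_zero]
  have hdet : ∀ x : ℝ, (algebraMap ℝ (Matrix (Fin (ρ+1)) (Fin (ρ+1)) ℝ) x - L).det
      = ∏ m : Fin (ρ+1), (x - ((k:ℝ) - ((m:ℕ):ℝ) * ((γ:ℝ) + (β:ℝ)))) := by
    intro x
    have hcom : (algebraMap ℝ (Matrix (Fin (ρ+1)) (Fin (ρ+1)) ℝ) x - L) * vA ρ
        = vA ρ * (algebraMap ℝ (Matrix (Fin (ρ+1)) (Fin (ρ+1)) ℝ) x - cMat k γ β ρ) := by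
      rw [sub_mul, mul_sub, hLA]
      congr 1
      rw [Algebra.algebraMap_eq_smul_one, smul_mul_assoc, one_mul, mul_smul_comm, mul_one]
    have hd := congrArg Matrix.det hcom
    rw [Matrix.det_mul, Matrix.det_mul] at hd
    have heq : (algebraMap ℝ (Matrix (Fin (ρ+1)) (Fin (ρ+1)) ℝ) x - L).det
        = (algebraMap ℝ (Matrix (Fin (ρ+1)) (Fin (ρ+1)) ℝ) x - cMat k γ β ρ).det :=
      mul_right_cancel₀ hdA (hd.trans (mul_comm _ _))
    rw [heq, Matrix.det_of_upperTriangular (htri x)]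
    refine Finset.prod_congr rfl fun m _ => ?_
    simp only [id, Matrix.sub_apply, Matrix.algebraMap_matrix_apply, eq_self_iff_true, if_true, cMat,
      Matrix.of_apply, cEnt_diag, Algebra.algebraMap_self, RingHom.id_apply]
  ext x
  simp only [spectrum.mem_iff, Matrix.isUnit_iff_isUnit_det, isUnit_iff_ne_zero, not_ne_iff,
    Set.mem_setOf_eq, hdet x, Finset.prod_eq_zero_iff, Finset.mem_univ, true_and, sub_eq_zero]
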